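/- arXiv:0910.5872 — 2 statements merged into one kernel-verified Lean document; each statement's English description precedes it below -/
import Mathlib

section
/- Let r_1, r_2, ..., r_{n+1} be i.i.d. nonnegative real-valued random variables with common continuous cumulative distribution function F_0. Let F_r^n(t) = (1/n) Σ_{i=1}^n 1_{r_i ≤ t} be the empirical distribution function of the first n radii, let C_n = E( sup_{t ≥ 0} | F_r^n(t) − F_0(t) | ), and let α ∈ (0,1) satisfy C_n < α. Define δ_{n+1} = inf{ t > 0 : 1 − F_r^n(t) < α − C_n } (so δ_{n+1} is a measurable function of r_1, ..., r_n). Then P( r_{n+1} > δ_{n+1} ) ≤ α. -/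
open MeasureTheory ProbabilityTheory Filter Set ENNReal

namespace SafetyAux

variable {ι : Type*}

/-- empirical-type function -/
noncomputable def emp (n : ℕ) (s : Finset ι) (y : ι → ℝ) (t : ℝ) : ℝ :=
  (1 / n : ℝ) * ∑ i ∈ s, (if y i ≤ t then (1 : ℝ) else 0)

lemma emp_mono (n : ℕ) (s : Finset ι) (y : ι → ℝ) : Monotone (emp n s y) := by
  intro a b hab
  unfold emp
  apply mul_le_mul_of_nonneg_left _ (by positivity)
  apply Finset.sum_le_sum
  intro i _
  by_cases h : y i ≤ a
  · simp [h, h.trans hab]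
  · simp [h]; positivity

lemma emp_nonneg (n : ℕ) (s : Finset ι) (y : ι → ℝ) (t : ℝ) : 0 ≤ emp n s y t := by
  unfold emp
  apply mul_nonneg (by positivity)
  apply Finset.sum_nonneg
  intro i _
  split <;> norm_num

lemma emp_le_one (n : ℕ) (hn : 0 < n) (s : Finset ι) (hcard : s.card = n) (y : ι → ℝ) (t : ℝ) :
    emp n s y t ≤ 1 := by
  unfold emp
  have h1 : ∑ i ∈ s, (if y i ≤ t then (1 : ℝ) else 0) ≤ ∑ i ∈ s, (1 : ℝ) := by
    apply Finset.sum_le_sum; intro i _; split <;> norm_num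
  have h2 : ∑ i ∈ s, (1 : ℝ) = n := by simp [hcard]
  rw [div_mul_eq_mul_div, one_mul, div_le_one (by exact_mod_cast hn)]
  linarith

lemma emp_eq_one (n : ℕ) (hn : 0 < n) (s : Finset ι) (hcard : s.card = n) (y : ι → ℝ) (t : ℝ)
    (h : ∀ i ∈ s, y i ≤ t) : emp n s y t = 1 := by
  unfold emp
  have : ∑ i ∈ s, (if y i ≤ t then (1 : ℝ) else 0) = ∑ i ∈ s, (1 : ℝ) :=
    Finset.sum_congr rfl (fun i hi => by simp [h i hi])
  rw [this]
  simp [hcard]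
  field_simp

/-- right local constancy -/
lemma emp_right_const (n : ℕ) (s : Finset ι) (y : ι → ℝ) (t : ℝ) :
    ∃ ε > 0, ∀ u, t ≤ u → u < t + ε → emp n s y u = emp n s y t := by
  classical
  set A := s.filter (fun i => t < y i) with hA
  by_cases hAe : A.Nonempty
  · set ε := A.inf' hAe (fun i => y i - t) with hε
    have hεpos : 0 < ε := by
      rw [hε]
      apply lt_of_lt_of_le _ (le_refl _)
      rw [Finset.lt_inf'_iff]
      intro i hi
      have := (Finset.mem_filter.mp hi).2
      linarith
    refine ⟨ε, hεpos, fun u hu1 hu2 => ?_⟩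
    unfold emp
    congr 1
    apply Finset.sum_congr rfl
    intro i hi
    by_cases h : y i ≤ t
    · simp [h, h.trans hu1]
    · push_neg at h
      have hiA : i ∈ A := Finset.mem_filter.mpr ⟨hi, h⟩
      have : ε ≤ y i - t := Finset.inf'_le _ hiA
      have h1 : ¬ (y i ≤ u) := by push_neg; linarith
      simp [h1, not_le.mpr h]
  · refine ⟨1, one_pos, fun u hu1 _ => ?_⟩
    unfold emp
    congr 1
    apply Finset.sum_congr rfl
    intro i hi
    have : y i ≤ t := by
      by_contra hc
      exact hAe ⟨i, Finset.mem_filter.mpr ⟨hi, not_le.mp hc⟩⟩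
    simp [this, this.trans hu1]

section sInfLemmas

variable {G : ℝ → ℝ} {c : ℝ}

lemma S_nonempty (hc : 0 < c) (hone : ∃ T, ∀ t, T ≤ t → G t = 1) :
    {t : ℝ | 0 < t ∧ 1 - G t < c}.Nonempty := by
  obtain ⟨T, hT⟩ := hone
  refine ⟨max T 1, lt_of_lt_of_le one_pos (le_max_right _ _), ?_⟩
  rw [hT _ (le_max_left _ _)]
  simpa using hc

lemma S_bddBelow : BddBelow {t : ℝ | 0 < t ∧ 1 - G t < c} :=
  ⟨0, fun t ht => ht.1.le⟩

lemma sInf_S_nonneg (hne : {t : ℝ | 0 < t ∧ 1 - G t < c}.Nonempty) :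
    0 ≤ sInf {t : ℝ | 0 < t ∧ 1 - G t < c} :=
  le_csInf hne (fun t ht => ht.1.le)

lemma mem_S_of_gt (hmono : Monotone G)
    (hne : {t : ℝ | 0 < t ∧ 1 - G t < c}.Nonempty)
    {e : ℝ} (he : sInf {t : ℝ | 0 < t ∧ 1 - G t < c} < e) :
    e ∈ {t : ℝ | 0 < t ∧ 1 - G t < c} := by
  obtain ⟨u, hu, hue⟩ := (csInf_lt_iff S_bddBelow hne).mp he
  exact ⟨hu.1.trans hue, lt_of_le_of_lt (by linarith [hmono hue.le]) hu.2⟩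

lemma key_bound (hrc : ∀ t, ∃ ε > 0, ∀ u, t ≤ u → u < t + ε → G u = G t)
    (hne : {t : ℝ | 0 < t ∧ 1 - G t < c}.Nonempty) :
    1 - G (sInf {t : ℝ | 0 < t ∧ 1 - G t < c}) < c := by
  set d := sInf {t : ℝ | 0 < t ∧ 1 - G t < c} with hd
  obtain ⟨ε, hεpos, hε⟩ := hrc d
  obtain ⟨u, hu, hud⟩ := (csInf_lt_iff S_bddBelow hne).mp
    (show d < d + ε by linarith)
  have hdu : d ≤ u := csInf_le S_bddBelow hu
  have := hε u hdu hud
  rw [← this]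
  exact hu.2

end sInfLemmas


lemma measurable_emp_apply [Fintype ι] (n : ℕ) (t : ℝ) :
    Measurable (fun x : ι → ℝ => emp n Finset.univ x t) := by
  unfold emp
  apply Measurable.const_mul
  apply Finset.measurable_sum
  intro i _
  exact Measurable.ite (measurableSet_le (measurable_pi_apply i) measurable_const)
    measurable_const measurable_const

lemma measurable_g [Fintype ι] (n : ℕ) (hn : 0 < n)
    (hcard : (Finset.univ : Finset ι).card = n) (c : ℝ) (hc : 0 < c) :
    Measurable (fun x : ι → ℝ =>
      sInf {t : ℝ | 0 < t ∧ 1 - emp n Finset.univ x t < c}) := by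
  apply measurable_of_Iio
  intro e
  have hset : (fun x : ι → ℝ =>
      sInf {t : ℝ | 0 < t ∧ 1 - emp n Finset.univ x t < c}) ⁻¹' (Iio e) =
      ⋃ q : ℚ, {x : ι → ℝ | (q : ℝ) < e ∧ 0 < (q : ℝ) ∧
        1 - emp n Finset.univ x q < c} := by
    ext x
    have hone : ∃ T, ∀ t, T ≤ t → emp n Finset.univ x t = 1 := by
      obtain ⟨M, hM⟩ := (Finset.univ.image x).exists_le
      exact ⟨M, fun t ht => emp_eq_one n hn _ hcard x t
        (fun i _ => le_trans (hM _ (Finset.mem_image_of_mem x (Finset.mem_univ i))) ht)⟩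
    have hne := S_nonempty (G := emp n Finset.univ x) hc hone
    constructor
    · intro hx
      simp only [Set.mem_preimage, Set.mem_Iio] at hx
      obtain ⟨q, hq1, hq2⟩ := exists_rat_btwn hx
      have hqS := mem_S_of_gt (emp_mono n Finset.univ x) hne hq1
      exact Set.mem_iUnion.mpr ⟨q, hq2, hqS.1, hqS.2⟩
    · intro hx
      obtain ⟨q, hq1, hq2, hq3⟩ := Set.mem_iUnion.mp hx
      simp only [Set.mem_preimage, Set.mem_Iio]
      exact lt_of_le_of_lt (csInf_le S_bddBelow ⟨hq2, hq3⟩) hq1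
  rw [hset]
  apply MeasurableSet.iUnion
  intro q
  refine MeasurableSet.inter (MeasurableSet.const _) (MeasurableSet.inter (MeasurableSet.const _) ?_)
  exact measurableSet_lt (measurable_const.sub (measurable_emp_apply n q)) measurable_const


lemma emp_hone [Fintype ι] (n : ℕ) (hn : 0 < n)
    (hcard : (Finset.univ : Finset ι).card = n) (x : ι → ℝ) :
    ∃ T, ∀ t, T ≤ t → emp n Finset.univ x t = 1 := by
  obtain ⟨M, hM⟩ := (Finset.univ.image x).exists_le
  exact ⟨M, fun t ht => emp_eq_one n hn _ hcard x t
    (fun i _ => le_trans (hM _ (Finset.mem_image_of_mem x (Finset.mem_univ i))) ht)⟩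

end SafetyAux

open SafetyAux

/-- If `r 0, ..., r n` are i.i.d. nonnegative random variables with common
continuous CDF `F0`, `Fn` is the empirical CDF of the first `n` of them,
`Cn = E (sup_{t ≥ 0} |Fn t - F0 t|)`, `α ∈ (0,1)` with `Cn < α`, and
`δ = inf {t > 0 : 1 - Fn t < α - Cn}`, then `P(r n > δ) ≤ α`. -/
theorem safety_area_iid
    {Ω : Type*} [MeasurableSpace Ω] (P : Measure Ω) [IsProbabilityMeasure P]
    (n : ℕ) (hn : 0 < n)
    (r : ℕ → Ω → ℝ)
    (hmeas : ∀ i, Measurable (r i))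
    (hnonneg : ∀ i ω, 0 ≤ r i ω)
    (hindep : iIndepFun r P)
    (F0 : ℝ → ℝ) (hF0cont : Continuous F0)
    (hF0 : ∀ i t, (P {ω | r i ω ≤ t}).toReal = F0 t)
    (Fn : ℝ → Ω → ℝ)
    (hFn : ∀ t ω,
      Fn t ω = (1 / n : ℝ) * ∑ i ∈ Finset.range n, (if r i ω ≤ t then (1 : ℝ) else 0))
    (Cn : ℝ)
    (hCn : Cn = ∫ ω, (⨆ t : {t : ℝ // 0 ≤ t}, |Fn t ω - F0 t|) ∂P)
    (α : ℝ) (hα0 : 0 < α) (hα1 : α < 1) (hCnα : Cn < α)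
    (δ : Ω → ℝ)
    (hδ : ∀ ω, δ ω = sInf {t : ℝ | 0 < t ∧ 1 - Fn t ω < α - Cn}) :
    (P {ω | δ ω < r n ω}).toReal ≤ α := by
  classical
  set β := α - Cn with hβdef
  have hβ : 0 < β := sub_pos.mpr hCnα
  -- the index type
  set ι' := {i : ℕ // i ∈ Finset.range n} with hι'
  have hcard : (Finset.univ : Finset ι').card = n := by
    show (Finset.univ : Finset {i : ℕ // i ∈ Finset.range n}).card = n
    rw [Finset.card_univ, Fintype.card_coe, Finset.card_range]
  set X : Ω → (ι' → ℝ) := fun ω i => r i ω with hX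
  have hXmeas : Measurable X := measurable_pi_lambda _ (fun i => hmeas i)
  -- identification of Fn with emp
  have hFn' : ∀ t ω, Fn t ω = emp n Finset.univ (X ω) t := by
    intro t ω
    rw [hFn]
    unfold emp
    congr 1
    exact (Finset.sum_coe_sort (Finset.range n)
      (fun i => if r i ω ≤ t then (1 : ℝ) else 0)).symm
  -- δ as a function of X
  set g : (ι' → ℝ) → ℝ := fun x =>
    sInf {t : ℝ | 0 < t ∧ 1 - emp n Finset.univ x t < β} with hg
  have hδeq : δ = fun ω => g (X ω) := by
    funext ω
    rw [hδ, hg]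
    congr 1
    ext t
    simp only [Set.mem_setOf_eq, hFn' t ω]
  have hgmeas : Measurable g := measurable_g n hn hcard β hβ
  have hδmeas : Measurable δ := by rw [hδeq]; exact hgmeas.comp hXmeas
  -- independence
  have hind : IndepFun δ (r n) P := by
    have h1 := hindep.indepFun_finset (Finset.range n) {n}
      (by simp) hmeas
    have h2 := h1.comp (φ := g)
      (ψ := fun y : ({n} : Finset ℕ) → ℝ => y ⟨n, Finset.mem_singleton_self n⟩)
      hgmeas (measurable_pi_apply _ :
        Measurable (fun y : ({n} : Finset ℕ) → ℝ => y ⟨n, Finset.mem_singleton_self n⟩))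
    have e1 : (g ∘ fun a (i : (Finset.range n : Finset ℕ)) => r i a) = δ := by
      rw [hδeq]; rfl
    have e2 : ((fun y : ({n} : Finset ℕ) → ℝ => y ⟨n, Finset.mem_singleton_self n⟩) ∘
        fun a (i : ({n} : Finset ℕ)) => r i a) = r n := rfl
    rwa [e1, e2] at h2
  -- bounds on F0 and Fn
  have hF0b : ∀ t, 0 ≤ F0 t ∧ F0 t ≤ 1 := by
    intro t
    rw [← hF0 n t]
    refine ⟨ENNReal.toReal_nonneg, ?_⟩
    calc (P {ω | r n ω ≤ t}).toReal ≤ (1 : ℝ≥0∞).toReal :=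
          ENNReal.toReal_mono ENNReal.one_ne_top prob_le_one
      _ = 1 := by simp
  have hFnb : ∀ t ω, 0 ≤ Fn t ω ∧ Fn t ω ≤ 1 := by
    intro t ω
    rw [hFn' t ω]
    exact ⟨emp_nonneg n _ _ t, emp_le_one n hn _ hcard _ t⟩
  have habs : ∀ (t : ℝ) ω, |Fn t ω - F0 t| ≤ 1 := by
    intro t ω
    have h1 := hF0b t; have h2 := hFnb t ω
    rw [abs_le]; constructor <;> linarith [h1.1, h1.2, h2.1, h2.2]
  haveI : Nonempty {t : ℝ // 0 ≤ t} := ⟨⟨0, le_refl 0⟩⟩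
  haveI : Nonempty {q : ℚ // 0 ≤ (q : ℝ)} := ⟨⟨0, by norm_num⟩⟩
  set hQ : Ω → ℝ := fun ω => ⨆ q : {q : ℚ // 0 ≤ (q : ℝ)}, |Fn q ω - F0 q| with hQdef
  have hbddQ : ∀ ω, BddAbove (Set.range fun q : {q : ℚ // 0 ≤ (q : ℝ)} => |Fn q ω - F0 q|) :=
    fun ω => ⟨1, by rintro x ⟨q, rfl⟩; exact habs q ω⟩
  have hbddT : ∀ ω, BddAbove (Set.range fun t : {t : ℝ // 0 ≤ t} => |Fn t ω - F0 t|) :=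
    fun ω => ⟨1, by rintro x ⟨t, rfl⟩; exact habs t ω⟩
  -- sup over nonneg reals = sup over nonneg rationals
  have heq : ∀ ω, (⨆ t : {t : ℝ // 0 ≤ t}, |Fn t ω - F0 t|) = hQ ω := by
    intro ω
    apply le_antisymm
    · apply ciSup_le
      rintro ⟨t, ht⟩
      apply _root_.le_of_forall_pos_le_add
      intro ε hε
      obtain ⟨ε', hε'pos, hε'⟩ := emp_right_const n Finset.univ (X ω) t
      obtain ⟨η, hηpos, hη⟩ := Metric.continuousAt_iff.mp (hF0cont.continuousAt (x := t)) ε hε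
      obtain ⟨q, hq1, hq2⟩ := exists_rat_btwn (show t < t + min ε' η by
        have := lt_min hε'pos hηpos; linarith)
      have hq0 : 0 ≤ (q : ℝ) := le_trans ht hq1.le
      have hFnq : Fn (q : ℝ) ω = Fn t ω := by
        rw [hFn' (q : ℝ) ω, hFn' t ω]
        exact hε' q hq1.le (lt_of_lt_of_le hq2 (by linarith [min_le_left ε' η]))
      have hF0q : |F0 q - F0 t| < ε := by
        have hd : dist (q : ℝ) t < η := by
          rw [Real.dist_eq, abs_of_nonneg (by linarith)]
          linarith [min_le_right ε' η]
        have := hη hd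
        rwa [Real.dist_eq] at this
      calc |Fn t ω - F0 t| ≤ |Fn t ω - F0 q| + |F0 q - F0 t| := abs_sub_le _ _ _
        _ ≤ |Fn (q : ℝ) ω - F0 q| + ε := by rw [hFnq]; linarith
        _ ≤ hQ ω + ε := by
            have := le_ciSup (hbddQ ω) (⟨q, hq0⟩ : {q : ℚ // 0 ≤ (q : ℝ)})
            linarith
    · apply ciSup_le
      rintro ⟨q, hq⟩
      exact le_ciSup (hbddT ω) (⟨(q : ℝ), hq⟩ : {t : ℝ // 0 ≤ t})
  -- measurability and integrability of hQ
  have hFnqmeas : ∀ q : ℚ, Measurable (fun ω => Fn (q : ℝ) ω) := by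
    intro q
    have : (fun ω => Fn (q : ℝ) ω) = fun ω => emp n Finset.univ (X ω) (q : ℝ) :=
      funext fun ω => hFn' (q : ℝ) ω
    rw [this]
    exact (measurable_emp_apply n (q : ℝ)).comp hXmeas
  have hQmeas : Measurable hQ := by
    rw [hQdef]
    exact Measurable.iSup fun q => ((hFnqmeas q).sub measurable_const).abs
  have hQ0 : ∀ ω, 0 ≤ hQ ω := by
    intro ω
    exact le_trans (abs_nonneg _)
      (le_ciSup (hbddQ ω) (⟨0, by norm_num⟩ : {q : ℚ // 0 ≤ (q : ℝ)}))
  have hQle : ∀ ω, hQ ω ≤ 1 := fun ω => ciSup_le fun q => habs q ω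
  have hQint : Integrable hQ P := by
    refine Integrable.mono' (integrable_const 1) hQmeas.aestronglyMeasurable
      (ae_of_all _ fun ω => ?_)
    rw [Real.norm_eq_abs, abs_of_nonneg (hQ0 ω)]
    exact hQle ω
  have hCnQ : Cn = ∫ ω, hQ ω ∂P := by
    rw [hCn]; exact integral_congr_ae (ae_of_all _ heq)
  -- pointwise bound
  have hpt : ∀ ω, 1 - F0 (δ ω) ≤ β + hQ ω := by
    intro ω
    have hone := emp_hone n hn hcard (X ω)
    have hne := S_nonempty (G := emp n Finset.univ (X ω)) hβ hone
    have hδω : δ ω = sInf {t : ℝ | 0 < t ∧ 1 - emp n Finset.univ (X ω) t < β} := by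
      rw [hδeq]
    have h0δ : 0 ≤ δ ω := by rw [hδω]; exact sInf_S_nonneg hne
    have hkey : 1 - Fn (δ ω) ω < β := by
      rw [hFn' (δ ω) ω, hδω]
      exact key_bound (emp_right_const n Finset.univ (X ω)) hne
    have h2 : Fn (δ ω) ω - F0 (δ ω) ≤ |Fn (δ ω) ω - F0 (δ ω)| := le_abs_self _
    have h3 : |Fn (δ ω) ω - F0 (δ ω)| ≤ hQ ω := by
      rw [← heq ω]
      exact le_ciSup (hbddT ω) (⟨δ ω, h0δ⟩ : {t : ℝ // 0 ≤ t})
    linarith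
  -- the measure computation
  set ν := P.map (r n) with hν
  haveI : IsProbabilityMeasure ν := Measure.isProbabilityMeasure_map (hmeas n).aemeasurable
  haveI : IsProbabilityMeasure (P.map δ) := Measure.isProbabilityMeasure_map hδmeas.aemeasurable
  have hIoi : ∀ x : ℝ, ν (Set.Ioi x) = ENNReal.ofReal (1 - F0 x) := by
    intro x
    have h1 : ν (Set.Iic x) = P {ω | r n ω ≤ x} := by
      rw [hν, Measure.map_apply (hmeas n) measurableSet_Iic]
      rfl
    have h2 : ν (Set.Iic x) = ENNReal.ofReal (F0 x) := by
      rw [← hF0 n x, ← h1, ENNReal.ofReal_toReal (measure_ne_top ν _)]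
    have h3 : ν (Set.Ioi x) = 1 - ν (Set.Iic x) := by
      rw [← Set.compl_Iic, measure_compl measurableSet_Iic (measure_ne_top ν _), measure_univ]
    rw [h3, h2, ← ENNReal.ofReal_one, ← ENNReal.ofReal_sub _ (hF0b x).1]
  have hmain : P {ω | δ ω < r n ω} ≤ ENNReal.ofReal α := by
    have hmap : P {ω | δ ω < r n ω} = ((P.map δ).prod ν) {p : ℝ × ℝ | p.1 < p.2} := by
      rw [← (indepFun_iff_map_prod_eq_prod_map_map hδmeas.aemeasurable
        (hmeas n).aemeasurable).mp hind]
      rw [Measure.map_apply (hδmeas.prodMk (hmeas n))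
        (measurableSet_lt measurable_fst measurable_snd)]
      rfl
    rw [hmap]
    calc ((P.map δ).prod ν) {p : ℝ × ℝ | p.1 < p.2}
        = ∫⁻ x, ν (Set.Ioi x) ∂(P.map δ) := by
          rw [Measure.prod_apply (measurableSet_lt measurable_fst measurable_snd)]
          rfl
      _ = ∫⁻ x, ENNReal.ofReal (1 - F0 x) ∂(P.map δ) := lintegral_congr hIoi
      _ = ∫⁻ ω, ENNReal.ofReal (1 - F0 (δ ω)) ∂P :=
          lintegral_map ((measurable_const.sub hF0cont.measurable).ennreal_ofReal) hδmeas
      _ ≤ ∫⁻ ω, ENNReal.ofReal (β + hQ ω) ∂P :=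
          lintegral_mono fun ω => ENNReal.ofReal_le_ofReal (hpt ω)
      _ = ENNReal.ofReal (∫ ω, (β + hQ ω) ∂P) :=
          (ofReal_integral_eq_lintegral_ofReal ((integrable_const β).add hQint)
            (ae_of_all _ fun ω => add_nonneg hβ.le (hQ0 ω))).symm
      _ = ENNReal.ofReal α := by
          rw [integral_add (integrable_const β) hQint, integral_const, probReal_univ]
          simp only [ENNReal.toReal_one, one_smul]
          rw [← hCnQ, hβdef]
          ring_nf
  calc (P {ω | δ ω < r n ω}).toReal ≤ (ENNReal.ofReal α).toReal :=
        ENNReal.toReal_mono ENNReal.ofReal_ne_top hmain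
    _ = α := ENNReal.toReal_ofReal hα0.le
end

section
/- Let X_1, ..., X_n be independent real-valued random variables, where X_h has cumulative distribution function F_h. Fix s ≤ t ≤ u and set Δ_h = F_h(t) − F_h(s), γ_h = F_h(u) − F_h(t), α_h = 1_{s < X_h ≤ t} − Δ_h, and β_h = 1_{t < X_h ≤ u} − γ_h. Then (1/n²) E( (Σ_{h=1}^n α_h)² (Σ_{h=1}^n β_h)² ) ≤ 2 ( (1/n) Σ_{h=1}^n Δ_h ) ( (1/n) Σ_{h=1}^n γ_h ). -/
open MeasureTheory ProbabilityTheory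

private lemma integrable_of_abs_le {Ω : Type*} [MeasurableSpace Ω] {P : Measure Ω}
    [IsProbabilityMeasure P] {f : Ω → ℝ} (hf : Measurable f) {C : ℝ} (hC : ∀ ω, |f ω| ≤ C) :
    Integrable f P :=
  (integrable_const C).mono' hf.aestronglyMeasurable
    (Filter.Eventually.of_forall fun ω => by simpa using hC ω)

private lemma abs_mul_le' {x y cx cy : ℝ} (hx : |x| ≤ cx) (hy : |y| ≤ cy) : |x * y| ≤ cx * cy := by
  rw [abs_mul]
  exact mul_le_mul hx hy (abs_nonneg y) ((abs_nonneg x).trans hx)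

private lemma abs_sq_le {x cx : ℝ} (hx : |x| ≤ cx) : |x ^ 2| ≤ cx ^ 2 := by
  rw [abs_pow]
  exact pow_le_pow_left₀ (abs_nonneg x) hx 2

private lemma integral_comb {Ω : Type*} [MeasurableSpace Ω] (P : Measure Ω)
    [IsProbabilityMeasure P] {A B : Set Ω} (hA : MeasurableSet A) (hB : MeasurableSet B)
    (cA cB c0 : ℝ) :
    ∫ ω, (cA * A.indicator (1 : Ω → ℝ) ω + cB * B.indicator (1 : Ω → ℝ) ω + c0) ∂P
      = cA * (P A).toReal + cB * (P B).toReal + c0 := by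
  have hiA : Integrable (A.indicator (1 : Ω → ℝ)) P := (integrable_const 1).indicator hA
  have hiB : Integrable (B.indicator (1 : Ω → ℝ)) P := (integrable_const 1).indicator hB
  have h1 : ∫ ω, (cA * A.indicator (1 : Ω → ℝ) ω + cB * B.indicator (1 : Ω → ℝ) ω + c0) ∂P
      = ∫ ω, (cA * A.indicator (1 : Ω → ℝ) ω + cB * B.indicator (1 : Ω → ℝ) ω) ∂P
        + ∫ _ω, c0 ∂P :=
    integral_add ((hiA.const_mul cA).add (hiB.const_mul cB)) (integrable_const c0)
  have h2 : ∫ ω, (cA * A.indicator (1 : Ω → ℝ) ω + cB * B.indicator (1 : Ω → ℝ) ω) ∂P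
      = ∫ ω, cA * A.indicator (1 : Ω → ℝ) ω ∂P + ∫ ω, cB * B.indicator (1 : Ω → ℝ) ω ∂P :=
    integral_add (hiA.const_mul cA) (hiB.const_mul cB)
  rw [h1, h2, integral_const_mul, integral_const_mul, integral_indicator_one hA,
    integral_indicator_one hB, integral_const]
  simp [Measure.real]

/-- One step of the induction: expectations of products split off the last variable. -/
private lemma step_lemma {Ω : Type*} [MeasurableSpace Ω] (P : Measure Ω) [IsProbabilityMeasure P]
    (A B a b : Ω → ℝ)
    (hInd : IndepFun (fun ω => (A ω, B ω)) (fun ω => (a ω, b ω)) P)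
    (hAm : Measurable A) (hBm : Measurable B) (ham : Measurable a) (hbm : Measurable b)
    (CA CB : ℝ) (hCA0 : 0 ≤ CA) (hCB0 : 0 ≤ CB)
    (hAb : ∀ ω, |A ω| ≤ CA) (hBb : ∀ ω, |B ω| ≤ CB)
    (hab : ∀ ω, |a ω| ≤ 1) (hbb : ∀ ω, |b ω| ≤ 1)
    (S T C δ g : ℝ)
    (hS : 0 ≤ S) (hT : 0 ≤ T) (hδ0 : 0 ≤ δ) (hg0 : 0 ≤ g)
    (hIA : ∫ ω, A ω ∂P = 0) (hIB : ∫ ω, B ω ∂P = 0)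
    (hIa : ∫ ω, a ω ∂P = 0) (hIb : ∫ ω, b ω ∂P = 0)
    (hIA2 : ∫ ω, A ω ^ 2 ∂P ≤ S) (hIB2 : ∫ ω, B ω ^ 2 ∂P ≤ T)
    (hIa2 : ∫ ω, a ω ^ 2 ∂P ≤ δ) (hIb2 : ∫ ω, b ω ^ 2 ∂P ≤ g)
    (hIAB : ∫ ω, A ω * B ω ∂P = -C) (hIab : ∫ ω, a ω * b ω ∂P = -(δ * g))
    (hIa2b2 : ∫ ω, a ω ^ 2 * b ω ^ 2 ∂P ≤ 2 * (δ * g))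
    (hIM : ∫ ω, A ω ^ 2 * B ω ^ 2 ∂P ≤ 2 * S * T)
    (hC4 : 4 * C * (δ * g) ≤ S * g + T * δ) :
    (∫ ω, (A ω + a ω) ∂P = 0) ∧ (∫ ω, (B ω + b ω) ∂P = 0) ∧
    (∫ ω, (A ω + a ω) ^ 2 ∂P ≤ S + δ) ∧ (∫ ω, (B ω + b ω) ^ 2 ∂P ≤ T + g) ∧
    (∫ ω, (A ω + a ω) * (B ω + b ω) ∂P = -(C + δ * g)) ∧
    (∫ ω, (A ω + a ω) ^ 2 * (B ω + b ω) ^ 2 ∂P ≤ 2 * (S + δ) * (T + g)) := by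
  have h2a : |(2 : ℝ)| ≤ 2 := by norm_num
  have h4a : |(4 : ℝ)| ≤ 4 := by norm_num
  -- integrability facts
  have iA : Integrable A P := integrable_of_abs_le hAm hAb
  have iB : Integrable B P := integrable_of_abs_le hBm hBb
  have ia : Integrable a P := integrable_of_abs_le ham hab
  have ib : Integrable b P := integrable_of_abs_le hbm hbb
  have iA2 : Integrable (fun ω => A ω ^ 2) P :=
    integrable_of_abs_le (hAm.pow_const 2) (fun ω => abs_sq_le (hAb ω))
  have iB2 : Integrable (fun ω => B ω ^ 2) P :=
    integrable_of_abs_le (hBm.pow_const 2) (fun ω => abs_sq_le (hBb ω))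
  have ia2 : Integrable (fun ω => a ω ^ 2) P :=
    integrable_of_abs_le (ham.pow_const 2) (fun ω => abs_sq_le (hab ω))
  have ib2 : Integrable (fun ω => b ω ^ 2) P :=
    integrable_of_abs_le (hbm.pow_const 2) (fun ω => abs_sq_le (hbb ω))
  have iAB : Integrable (fun ω => A ω * B ω) P :=
    integrable_of_abs_le (hAm.mul hBm) (fun ω => abs_mul_le' (hAb ω) (hBb ω))
  have iab : Integrable (fun ω => a ω * b ω) P :=
    integrable_of_abs_le (ham.mul hbm) (fun ω => abs_mul_le' (hab ω) (hbb ω))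
  have iab2 : Integrable (fun ω => a ω * b ω ^ 2) P :=
    integrable_of_abs_le (ham.mul (hbm.pow_const 2))
      (fun ω => abs_mul_le' (hab ω) (abs_sq_le (hbb ω)))
  have ia2b : Integrable (fun ω => a ω ^ 2 * b ω) P :=
    integrable_of_abs_le ((ham.pow_const 2).mul hbm)
      (fun ω => abs_mul_le' (abs_sq_le (hab ω)) (hbb ω))
  have ia2b2 : Integrable (fun ω => a ω ^ 2 * b ω ^ 2) P :=
    integrable_of_abs_le ((ham.pow_const 2).mul (hbm.pow_const 2))
      (fun ω => abs_mul_le' (abs_sq_le (hab ω)) (abs_sq_le (hbb ω)))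
  have i2A : Integrable (fun ω => 2 * A ω) P :=
    integrable_of_abs_le (hAm.const_mul 2) (fun ω => abs_mul_le' h2a (hAb ω))
  have i2B : Integrable (fun ω => 2 * B ω) P :=
    integrable_of_abs_le (hBm.const_mul 2) (fun ω => abs_mul_le' h2a (hBb ω))
  have i2A2B : Integrable (fun ω => 2 * (A ω ^ 2 * B ω)) P :=
    integrable_of_abs_le (((hAm.pow_const 2).mul hBm).const_mul 2)
      (fun ω => abs_mul_le' h2a (abs_mul_le' (abs_sq_le (hAb ω)) (hBb ω)))
  have i2AB2 : Integrable (fun ω => 2 * (A ω * B ω ^ 2)) P :=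
    integrable_of_abs_le ((hAm.mul (hBm.pow_const 2)).const_mul 2)
      (fun ω => abs_mul_le' h2a (abs_mul_le' (hAb ω) (abs_sq_le (hBb ω))))
  have i4AB : Integrable (fun ω => 4 * (A ω * B ω)) P :=
    integrable_of_abs_le ((hAm.mul hBm).const_mul 4)
      (fun ω => abs_mul_le' h4a (abs_mul_le' (hAb ω) (hBb ω)))
  have I1 : Integrable (fun ω => A ω ^ 2 * B ω ^ 2) P :=
    integrable_of_abs_le ((hAm.pow_const 2).mul (hBm.pow_const 2))
      (fun ω => abs_mul_le' (abs_sq_le (hAb ω)) (abs_sq_le (hBb ω)))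
  have I2 : Integrable (fun ω => 2 * (A ω ^ 2 * B ω) * b ω) P :=
    integrable_of_abs_le ((((hAm.pow_const 2).mul hBm).const_mul 2).mul hbm)
      (fun ω => abs_mul_le' (abs_mul_le' h2a (abs_mul_le' (abs_sq_le (hAb ω)) (hBb ω))) (hbb ω))
  have I3 : Integrable (fun ω => A ω ^ 2 * b ω ^ 2) P :=
    integrable_of_abs_le ((hAm.pow_const 2).mul (hbm.pow_const 2))
      (fun ω => abs_mul_le' (abs_sq_le (hAb ω)) (abs_sq_le (hbb ω)))
  have I4 : Integrable (fun ω => 2 * (A ω * B ω ^ 2) * a ω) P :=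
    integrable_of_abs_le (((hAm.mul (hBm.pow_const 2)).const_mul 2).mul ham)
      (fun ω => abs_mul_le' (abs_mul_le' h2a (abs_mul_le' (hAb ω) (abs_sq_le (hBb ω)))) (hab ω))
  have I5 : Integrable (fun ω => 4 * (A ω * B ω) * (a ω * b ω)) P :=
    integrable_of_abs_le (((hAm.mul hBm).const_mul 4).mul (ham.mul hbm))
      (fun ω => abs_mul_le' (abs_mul_le' h4a (abs_mul_le' (hAb ω) (hBb ω)))
        (abs_mul_le' (hab ω) (hbb ω)))
  have I6 : Integrable (fun ω => 2 * A ω * (a ω * b ω ^ 2)) P :=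
    integrable_of_abs_le ((hAm.const_mul 2).mul (ham.mul (hbm.pow_const 2)))
      (fun ω => abs_mul_le' (abs_mul_le' h2a (hAb ω)) (abs_mul_le' (hab ω) (abs_sq_le (hbb ω))))
  have I7 : Integrable (fun ω => B ω ^ 2 * a ω ^ 2) P :=
    integrable_of_abs_le ((hBm.pow_const 2).mul (ham.pow_const 2))
      (fun ω => abs_mul_le' (abs_sq_le (hBb ω)) (abs_sq_le (hab ω)))
  have I8 : Integrable (fun ω => 2 * B ω * (a ω ^ 2 * b ω)) P :=
    integrable_of_abs_le ((hBm.const_mul 2).mul ((ham.pow_const 2).mul hbm))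
      (fun ω => abs_mul_le' (abs_mul_le' h2a (hBb ω)) (abs_mul_le' (abs_sq_le (hab ω)) (hbb ω)))
  have I9 := ia2b2
  have i2Aa : Integrable (fun ω => 2 * A ω * a ω) P :=
    integrable_of_abs_le ((hAm.const_mul 2).mul ham)
      (fun ω => abs_mul_le' (abs_mul_le' h2a (hAb ω)) (hab ω))
  have i2Bb : Integrable (fun ω => 2 * B ω * b ω) P :=
    integrable_of_abs_le ((hBm.const_mul 2).mul hbm)
      (fun ω => abs_mul_le' (abs_mul_le' h2a (hBb ω)) (hbb ω))
  have iAb : Integrable (fun ω => A ω * b ω) P :=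
    integrable_of_abs_le (hAm.mul hbm) (fun ω => abs_mul_le' (hAb ω) (hbb ω))
  have iBa : Integrable (fun ω => B ω * a ω) P :=
    integrable_of_abs_le (hBm.mul ham) (fun ω => abs_mul_le' (hBb ω) (hab ω))
  -- key independence fact
  have key : ∀ (p q : ℝ × ℝ → ℝ), Measurable p → Measurable q →
      Integrable (fun ω => p (A ω, B ω)) P → Integrable (fun ω => q (a ω, b ω)) P →
      ∫ ω, p (A ω, B ω) * q (a ω, b ω) ∂P
        = (∫ ω, p (A ω, B ω) ∂P) * ∫ ω, q (a ω, b ω) ∂P := by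
    intro p q hp hq hip hiq
    exact (hInd.comp hp hq).integral_mul_eq_mul_integral hip.aestronglyMeasurable hiq.aestronglyMeasurable
  -- nonnegativity of squares
  have nA2 : (0 : ℝ) ≤ ∫ ω, A ω ^ 2 ∂P := integral_nonneg fun ω => sq_nonneg _
  have nB2 : (0 : ℝ) ≤ ∫ ω, B ω ^ 2 ∂P := integral_nonneg fun ω => sq_nonneg _
  have na2 : (0 : ℝ) ≤ ∫ ω, a ω ^ 2 ∂P := integral_nonneg fun ω => sq_nonneg _
  have nb2 : (0 : ℝ) ≤ ∫ ω, b ω ^ 2 ∂P := integral_nonneg fun ω => sq_nonneg _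
  -- conclusion (1)
  have c1 : ∫ ω, (A ω + a ω) ∂P = 0 := by
    have h : ∫ ω, (A ω + a ω) ∂P = ∫ ω, A ω ∂P + ∫ ω, a ω ∂P := integral_add iA ia
    rw [h, hIA, hIa, add_zero]
  have c2 : ∫ ω, (B ω + b ω) ∂P = 0 := by
    have h : ∫ ω, (B ω + b ω) ∂P = ∫ ω, B ω ∂P + ∫ ω, b ω ∂P := integral_add iB ib
    rw [h, hIB, hIb, add_zero]
  -- conclusion (3)
  have c3 : ∫ ω, (A ω + a ω) ^ 2 ∂P ≤ S + δ := by
    have hx : ∫ ω, (A ω + a ω) ^ 2 ∂P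
        = ∫ ω, (A ω ^ 2 + (2 * A ω * a ω + a ω ^ 2)) ∂P :=
      integral_congr_ae (Filter.Eventually.of_forall fun ω => by ring)
    have hJ : Integrable (fun ω => 2 * A ω * a ω + a ω ^ 2) P := i2Aa.add ia2
    have hd1 : ∫ ω, (A ω ^ 2 + (2 * A ω * a ω + a ω ^ 2)) ∂P
        = ∫ ω, A ω ^ 2 ∂P + ∫ ω, (2 * A ω * a ω + a ω ^ 2) ∂P := integral_add iA2 hJ
    have hd2 : ∫ ω, (2 * A ω * a ω + a ω ^ 2) ∂P
        = ∫ ω, 2 * A ω * a ω ∂P + ∫ ω, a ω ^ 2 ∂P := integral_add i2Aa ia2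
    have hv : ∫ ω, 2 * A ω * a ω ∂P = (∫ ω, 2 * A ω ∂P) * ∫ ω, a ω ∂P :=
      key (fun x => 2 * x.1) (fun y => y.1) (measurable_fst.const_mul 2) measurable_fst i2A ia
    rw [hx, hd1, hd2, hv, hIa, mul_zero, zero_add]
    linarith [hIA2, hIa2]
  have c4 : ∫ ω, (B ω + b ω) ^ 2 ∂P ≤ T + g := by
    have hx : ∫ ω, (B ω + b ω) ^ 2 ∂P
        = ∫ ω, (B ω ^ 2 + (2 * B ω * b ω + b ω ^ 2)) ∂P :=
      integral_congr_ae (Filter.Eventually.of_forall fun ω => by ring)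
    have hJ : Integrable (fun ω => 2 * B ω * b ω + b ω ^ 2) P := i2Bb.add ib2
    have hd1 : ∫ ω, (B ω ^ 2 + (2 * B ω * b ω + b ω ^ 2)) ∂P
        = ∫ ω, B ω ^ 2 ∂P + ∫ ω, (2 * B ω * b ω + b ω ^ 2) ∂P := integral_add iB2 hJ
    have hd2 : ∫ ω, (2 * B ω * b ω + b ω ^ 2) ∂P
        = ∫ ω, 2 * B ω * b ω ∂P + ∫ ω, b ω ^ 2 ∂P := integral_add i2Bb ib2
    have hv : ∫ ω, 2 * B ω * b ω ∂P = (∫ ω, 2 * B ω ∂P) * ∫ ω, b ω ∂P :=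
      key (fun x => 2 * x.2) (fun y => y.2) (measurable_snd.const_mul 2) measurable_snd i2B ib
    rw [hx, hd1, hd2, hv, hIb, mul_zero, zero_add]
    linarith [hIB2, hIb2]
  -- conclusion (5)
  have c5 : ∫ ω, (A ω + a ω) * (B ω + b ω) ∂P = -(C + δ * g) := by
    have hx : ∫ ω, (A ω + a ω) * (B ω + b ω) ∂P
        = ∫ ω, (A ω * B ω + (A ω * b ω + (B ω * a ω + a ω * b ω))) ∂P :=
      integral_congr_ae (Filter.Eventually.of_forall fun ω => by ring)
    have hJ2 : Integrable (fun ω => B ω * a ω + a ω * b ω) P := iBa.add iab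
    have hJ1 : Integrable (fun ω => A ω * b ω + (B ω * a ω + a ω * b ω)) P := iAb.add hJ2
    have hd1 : ∫ ω, (A ω * B ω + (A ω * b ω + (B ω * a ω + a ω * b ω))) ∂P
        = ∫ ω, A ω * B ω ∂P + ∫ ω, (A ω * b ω + (B ω * a ω + a ω * b ω)) ∂P :=
      integral_add iAB hJ1
    have hd2 : ∫ ω, (A ω * b ω + (B ω * a ω + a ω * b ω)) ∂P
        = ∫ ω, A ω * b ω ∂P + ∫ ω, (B ω * a ω + a ω * b ω) ∂P := integral_add iAb hJ2
    have hd3 : ∫ ω, (B ω * a ω + a ω * b ω) ∂P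
        = ∫ ω, B ω * a ω ∂P + ∫ ω, a ω * b ω ∂P := integral_add iBa iab
    have hv1 : ∫ ω, A ω * b ω ∂P = (∫ ω, A ω ∂P) * ∫ ω, b ω ∂P :=
      key (fun x => x.1) (fun y => y.2) measurable_fst measurable_snd iA ib
    have hv2 : ∫ ω, B ω * a ω ∂P = (∫ ω, B ω ∂P) * ∫ ω, a ω ∂P :=
      key (fun x => x.2) (fun y => y.1) measurable_snd measurable_fst iB ia
    rw [hx, hd1, hd2, hd3, hv1, hv2, hIA, hIB, hIAB, hIab, zero_mul, zero_mul]
    ring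
  -- conclusion (6)
  have c6 : ∫ ω, (A ω + a ω) ^ 2 * (B ω + b ω) ^ 2 ∂P ≤ 2 * (S + δ) * (T + g) := by
    have hx : ∫ ω, (A ω + a ω) ^ 2 * (B ω + b ω) ^ 2 ∂P
        = ∫ ω, (A ω ^ 2 * B ω ^ 2 + (2 * (A ω ^ 2 * B ω) * b ω + (A ω ^ 2 * b ω ^ 2 +
            (2 * (A ω * B ω ^ 2) * a ω + (4 * (A ω * B ω) * (a ω * b ω) +
            (2 * A ω * (a ω * b ω ^ 2) + (B ω ^ 2 * a ω ^ 2 +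
            (2 * B ω * (a ω ^ 2 * b ω) + a ω ^ 2 * b ω ^ 2)))))))) ∂P :=
      integral_congr_ae (Filter.Eventually.of_forall fun ω => by ring)
    have J8 : Integrable (fun ω => 2 * B ω * (a ω ^ 2 * b ω) + a ω ^ 2 * b ω ^ 2) P := I8.add I9
    have J7 : Integrable (fun ω => B ω ^ 2 * a ω ^ 2 +
        (2 * B ω * (a ω ^ 2 * b ω) + a ω ^ 2 * b ω ^ 2)) P := I7.add J8
    have J6 : Integrable (fun ω => 2 * A ω * (a ω * b ω ^ 2) + (B ω ^ 2 * a ω ^ 2 +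
        (2 * B ω * (a ω ^ 2 * b ω) + a ω ^ 2 * b ω ^ 2))) P := I6.add J7
    have J5 : Integrable (fun ω => 4 * (A ω * B ω) * (a ω * b ω) +
        (2 * A ω * (a ω * b ω ^ 2) + (B ω ^ 2 * a ω ^ 2 +
        (2 * B ω * (a ω ^ 2 * b ω) + a ω ^ 2 * b ω ^ 2)))) P := I5.add J6
    have J4 : Integrable (fun ω => 2 * (A ω * B ω ^ 2) * a ω +
        (4 * (A ω * B ω) * (a ω * b ω) + (2 * A ω * (a ω * b ω ^ 2) + (B ω ^ 2 * a ω ^ 2 +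
        (2 * B ω * (a ω ^ 2 * b ω) + a ω ^ 2 * b ω ^ 2))))) P := I4.add J5
    have J3 : Integrable (fun ω => A ω ^ 2 * b ω ^ 2 + (2 * (A ω * B ω ^ 2) * a ω +
        (4 * (A ω * B ω) * (a ω * b ω) + (2 * A ω * (a ω * b ω ^ 2) + (B ω ^ 2 * a ω ^ 2 +
        (2 * B ω * (a ω ^ 2 * b ω) + a ω ^ 2 * b ω ^ 2)))))) P := I3.add J4
    have J2 : Integrable (fun ω => 2 * (A ω ^ 2 * B ω) * b ω + (A ω ^ 2 * b ω ^ 2 +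
        (2 * (A ω * B ω ^ 2) * a ω + (4 * (A ω * B ω) * (a ω * b ω) +
        (2 * A ω * (a ω * b ω ^ 2) + (B ω ^ 2 * a ω ^ 2 +
        (2 * B ω * (a ω ^ 2 * b ω) + a ω ^ 2 * b ω ^ 2))))))) P := I2.add J3
    have D1 : ∫ ω, (A ω ^ 2 * B ω ^ 2 + (2 * (A ω ^ 2 * B ω) * b ω + (A ω ^ 2 * b ω ^ 2 +
        (2 * (A ω * B ω ^ 2) * a ω + (4 * (A ω * B ω) * (a ω * b ω) +
        (2 * A ω * (a ω * b ω ^ 2) + (B ω ^ 2 * a ω ^ 2 +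
        (2 * B ω * (a ω ^ 2 * b ω) + a ω ^ 2 * b ω ^ 2)))))))) ∂P
        = ∫ ω, A ω ^ 2 * B ω ^ 2 ∂P + ∫ ω, (2 * (A ω ^ 2 * B ω) * b ω + (A ω ^ 2 * b ω ^ 2 +
        (2 * (A ω * B ω ^ 2) * a ω + (4 * (A ω * B ω) * (a ω * b ω) +
        (2 * A ω * (a ω * b ω ^ 2) + (B ω ^ 2 * a ω ^ 2 +
        (2 * B ω * (a ω ^ 2 * b ω) + a ω ^ 2 * b ω ^ 2))))))) ∂P := integral_add I1 J2
    have D2 : ∫ ω, (2 * (A ω ^ 2 * B ω) * b ω + (A ω ^ 2 * b ω ^ 2 +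
        (2 * (A ω * B ω ^ 2) * a ω + (4 * (A ω * B ω) * (a ω * b ω) +
        (2 * A ω * (a ω * b ω ^ 2) + (B ω ^ 2 * a ω ^ 2 +
        (2 * B ω * (a ω ^ 2 * b ω) + a ω ^ 2 * b ω ^ 2))))))) ∂P
        = ∫ ω, 2 * (A ω ^ 2 * B ω) * b ω ∂P + ∫ ω, (A ω ^ 2 * b ω ^ 2 +
        (2 * (A ω * B ω ^ 2) * a ω + (4 * (A ω * B ω) * (a ω * b ω) +
        (2 * A ω * (a ω * b ω ^ 2) + (B ω ^ 2 * a ω ^ 2 +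
        (2 * B ω * (a ω ^ 2 * b ω) + a ω ^ 2 * b ω ^ 2)))))) ∂P := integral_add I2 J3
    have D3 : ∫ ω, (A ω ^ 2 * b ω ^ 2 + (2 * (A ω * B ω ^ 2) * a ω +
        (4 * (A ω * B ω) * (a ω * b ω) + (2 * A ω * (a ω * b ω ^ 2) + (B ω ^ 2 * a ω ^ 2 +
        (2 * B ω * (a ω ^ 2 * b ω) + a ω ^ 2 * b ω ^ 2)))))) ∂P
        = ∫ ω, A ω ^ 2 * b ω ^ 2 ∂P + ∫ ω, (2 * (A ω * B ω ^ 2) * a ω +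
        (4 * (A ω * B ω) * (a ω * b ω) + (2 * A ω * (a ω * b ω ^ 2) + (B ω ^ 2 * a ω ^ 2 +
        (2 * B ω * (a ω ^ 2 * b ω) + a ω ^ 2 * b ω ^ 2))))) ∂P := integral_add I3 J4
    have D4 : ∫ ω, (2 * (A ω * B ω ^ 2) * a ω + (4 * (A ω * B ω) * (a ω * b ω) +
        (2 * A ω * (a ω * b ω ^ 2) + (B ω ^ 2 * a ω ^ 2 +
        (2 * B ω * (a ω ^ 2 * b ω) + a ω ^ 2 * b ω ^ 2))))) ∂P
        = ∫ ω, 2 * (A ω * B ω ^ 2) * a ω ∂P + ∫ ω, (4 * (A ω * B ω) * (a ω * b ω) +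
        (2 * A ω * (a ω * b ω ^ 2) + (B ω ^ 2 * a ω ^ 2 +
        (2 * B ω * (a ω ^ 2 * b ω) + a ω ^ 2 * b ω ^ 2)))) ∂P := integral_add I4 J5
    have D5 : ∫ ω, (4 * (A ω * B ω) * (a ω * b ω) + (2 * A ω * (a ω * b ω ^ 2) +
        (B ω ^ 2 * a ω ^ 2 + (2 * B ω * (a ω ^ 2 * b ω) + a ω ^ 2 * b ω ^ 2)))) ∂P
        = ∫ ω, 4 * (A ω * B ω) * (a ω * b ω) ∂P + ∫ ω, (2 * A ω * (a ω * b ω ^ 2) +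
        (B ω ^ 2 * a ω ^ 2 + (2 * B ω * (a ω ^ 2 * b ω) + a ω ^ 2 * b ω ^ 2))) ∂P :=
      integral_add I5 J6
    have D6 : ∫ ω, (2 * A ω * (a ω * b ω ^ 2) + (B ω ^ 2 * a ω ^ 2 +
        (2 * B ω * (a ω ^ 2 * b ω) + a ω ^ 2 * b ω ^ 2))) ∂P
        = ∫ ω, 2 * A ω * (a ω * b ω ^ 2) ∂P + ∫ ω, (B ω ^ 2 * a ω ^ 2 +
        (2 * B ω * (a ω ^ 2 * b ω) + a ω ^ 2 * b ω ^ 2)) ∂P := integral_add I6 J7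
    have D7 : ∫ ω, (B ω ^ 2 * a ω ^ 2 + (2 * B ω * (a ω ^ 2 * b ω) + a ω ^ 2 * b ω ^ 2)) ∂P
        = ∫ ω, B ω ^ 2 * a ω ^ 2 ∂P + ∫ ω, (2 * B ω * (a ω ^ 2 * b ω) + a ω ^ 2 * b ω ^ 2) ∂P :=
      integral_add I7 J8
    have D8 : ∫ ω, (2 * B ω * (a ω ^ 2 * b ω) + a ω ^ 2 * b ω ^ 2) ∂P
        = ∫ ω, 2 * B ω * (a ω ^ 2 * b ω) ∂P + ∫ ω, a ω ^ 2 * b ω ^ 2 ∂P := integral_add I8 I9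
    -- values of the cross terms
    have E2 : ∫ ω, 2 * (A ω ^ 2 * B ω) * b ω ∂P = 0 := by
      have h : ∫ ω, 2 * (A ω ^ 2 * B ω) * b ω ∂P
          = (∫ ω, 2 * (A ω ^ 2 * B ω) ∂P) * ∫ ω, b ω ∂P :=
        key (fun x => 2 * (x.1 ^ 2 * x.2)) (fun y => y.2)
          (((measurable_fst.pow_const 2).mul measurable_snd).const_mul 2) measurable_snd
          i2A2B ib
      rw [h, hIb, mul_zero]
    have E3 : ∫ ω, A ω ^ 2 * b ω ^ 2 ∂P = (∫ ω, A ω ^ 2 ∂P) * ∫ ω, b ω ^ 2 ∂P :=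
      key (fun x => x.1 ^ 2) (fun y => y.2 ^ 2) (measurable_fst.pow_const 2)
        (measurable_snd.pow_const 2) iA2 ib2
    have E4 : ∫ ω, 2 * (A ω * B ω ^ 2) * a ω ∂P = 0 := by
      have h : ∫ ω, 2 * (A ω * B ω ^ 2) * a ω ∂P
          = (∫ ω, 2 * (A ω * B ω ^ 2) ∂P) * ∫ ω, a ω ∂P :=
        key (fun x => 2 * (x.1 * x.2 ^ 2)) (fun y => y.1)
          ((measurable_fst.mul (measurable_snd.pow_const 2)).const_mul 2) measurable_fst
          i2AB2 ia
      rw [h, hIa, mul_zero]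
    have E5 : ∫ ω, 4 * (A ω * B ω) * (a ω * b ω) ∂P = 4 * C * (δ * g) := by
      have h : ∫ ω, 4 * (A ω * B ω) * (a ω * b ω) ∂P
          = (∫ ω, 4 * (A ω * B ω) ∂P) * ∫ ω, a ω * b ω ∂P :=
        key (fun x => 4 * (x.1 * x.2)) (fun y => y.1 * y.2)
          ((measurable_fst.mul measurable_snd).const_mul 4)
          (measurable_fst.mul measurable_snd) i4AB iab
      have h2 : ∫ ω, 4 * (A ω * B ω) ∂P = 4 * ∫ ω, A ω * B ω ∂P :=
        integral_const_mul 4 fun ω => A ω * B ω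
      rw [h, h2, hIAB, hIab]
      ring
    have E6 : ∫ ω, 2 * A ω * (a ω * b ω ^ 2) ∂P = 0 := by
      have h : ∫ ω, 2 * A ω * (a ω * b ω ^ 2) ∂P
          = (∫ ω, 2 * A ω ∂P) * ∫ ω, a ω * b ω ^ 2 ∂P :=
        key (fun x => 2 * x.1) (fun y => y.1 * y.2 ^ 2) (measurable_fst.const_mul 2)
          (measurable_fst.mul (measurable_snd.pow_const 2)) i2A iab2
      have h2 : ∫ ω, 2 * A ω ∂P = 2 * ∫ ω, A ω ∂P := integral_const_mul 2 A
      rw [h, h2, hIA, mul_zero, zero_mul]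
    have E7 : ∫ ω, B ω ^ 2 * a ω ^ 2 ∂P = (∫ ω, B ω ^ 2 ∂P) * ∫ ω, a ω ^ 2 ∂P :=
      key (fun x => x.2 ^ 2) (fun y => y.1 ^ 2) (measurable_snd.pow_const 2)
        (measurable_fst.pow_const 2) iB2 ia2
    have E8 : ∫ ω, 2 * B ω * (a ω ^ 2 * b ω) ∂P = 0 := by
      have h : ∫ ω, 2 * B ω * (a ω ^ 2 * b ω) ∂P
          = (∫ ω, 2 * B ω ∂P) * ∫ ω, a ω ^ 2 * b ω ∂P :=
        key (fun x => 2 * x.2) (fun y => y.1 ^ 2 * y.2) (measurable_snd.const_mul 2)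
          ((measurable_fst.pow_const 2).mul measurable_snd) i2B ia2b
      have h2 : ∫ ω, 2 * B ω ∂P = 2 * ∫ ω, B ω ∂P := integral_const_mul 2 B
      rw [h, h2, hIB, mul_zero, zero_mul]
    have hp1 : (∫ ω, A ω ^ 2 ∂P) * ∫ ω, b ω ^ 2 ∂P ≤ S * g :=
      mul_le_mul hIA2 hIb2 nb2 hS
    have hp2 : (∫ ω, B ω ^ 2 ∂P) * ∫ ω, a ω ^ 2 ∂P ≤ T * δ :=
      mul_le_mul hIB2 hIa2 na2 hT
    rw [hx, D1, D2, D3, D4, D5, D6, D7, D8, E2, E3, E4, E5, E6, E7, E8]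
    linarith [hIM, hIa2b2, hC4, hp1, hp2]
  exact ⟨c1, c2, c3, c4, c5, c6⟩

private lemma fourth_moment_aux {Ω : Type*} [MeasurableSpace Ω] (P : Measure Ω)
    [IsProbabilityMeasure P]
    (X : ℕ → Ω → ℝ) (hmeas : ∀ i, Measurable (X i))
    (hindep : iIndepFun X P)
    (gA gB : ℕ → ℝ → ℝ) (hgA : ∀ i, Measurable (gA i)) (hgB : ∀ i, Measurable (gB i))
    (hbA : ∀ i x, |gA i x| ≤ 1) (hbB : ∀ i x, |gB i x| ≤ 1)
    (Δ γ : ℕ → ℝ)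
    (hΔ0 : ∀ i, 0 ≤ Δ i) (hγ0 : ∀ i, 0 ≤ γ i) (hΔγ : ∀ i, Δ i + γ i ≤ 1)
    (hEA : ∀ i, ∫ ω, gA i (X i ω) ∂P = 0)
    (hEB : ∀ i, ∫ ω, gB i (X i ω) ∂P = 0)
    (hEA2 : ∀ i, ∫ ω, gA i (X i ω) ^ 2 ∂P ≤ Δ i)
    (hEB2 : ∀ i, ∫ ω, gB i (X i ω) ^ 2 ∂P ≤ γ i)
    (hEAB : ∀ i, ∫ ω, gA i (X i ω) * gB i (X i ω) ∂P = -(Δ i * γ i))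
    (hEA2B2 : ∀ i, ∫ ω, gA i (X i ω) ^ 2 * gB i (X i ω) ^ 2 ∂P ≤ 2 * (Δ i * γ i)) :
    ∀ m : ℕ,
      (∫ ω, (∑ h ∈ Finset.range m, gA h (X h ω)) ∂P = 0) ∧
      (∫ ω, (∑ h ∈ Finset.range m, gB h (X h ω)) ∂P = 0) ∧
      (∫ ω, (∑ h ∈ Finset.range m, gA h (X h ω)) ^ 2 ∂P ≤ ∑ h ∈ Finset.range m, Δ h) ∧
      (∫ ω, (∑ h ∈ Finset.range m, gB h (X h ω)) ^ 2 ∂P ≤ ∑ h ∈ Finset.range m, γ h) ∧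
      (∫ ω, (∑ h ∈ Finset.range m, gA h (X h ω)) * (∑ h ∈ Finset.range m, gB h (X h ω)) ∂P
        = -(∑ h ∈ Finset.range m, Δ h * γ h)) ∧
      (∫ ω, (∑ h ∈ Finset.range m, gA h (X h ω)) ^ 2 * (∑ h ∈ Finset.range m, gB h (X h ω)) ^ 2 ∂P
        ≤ 2 * (∑ h ∈ Finset.range m, Δ h) * (∑ h ∈ Finset.range m, γ h)) := by
  intro m
  induction m with
  | zero => norm_num
  | succ m ih =>
    obtain ⟨ihA, ihB, ihA2, ihB2, ihAB, ihM⟩ := ih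
    -- independence of the pair of partial sums from the new variable
    have hIndm : IndepFun
        (fun ω => (∑ h ∈ Finset.range m, gA h (X h ω), ∑ h ∈ Finset.range m, gB h (X h ω)))
        (fun ω => (gA m (X m ω), gB m (X m ω))) P := by
      have hdisj : Disjoint (Finset.range m) ({m} : Finset ℕ) := by
        simp only [Finset.disjoint_left, Finset.mem_range, Finset.mem_singleton]
        omega
      have base := hindep.indepFun_finset (Finset.range m) {m} hdisj hmeas
      have hφ : Measurable (fun v : { x // x ∈ Finset.range m } → ℝ =>
          ((∑ i : { x // x ∈ Finset.range m }, gA i.1 (v i)),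
           (∑ i : { x // x ∈ Finset.range m }, gB i.1 (v i)))) :=
        Measurable.prodMk
          (Finset.measurable_sum Finset.univ fun i _ => (hgA i.1).comp (measurable_pi_apply i))
          (Finset.measurable_sum Finset.univ fun i _ => (hgB i.1).comp (measurable_pi_apply i))
      have hψ : Measurable (fun v : { x // x ∈ ({m} : Finset ℕ) } → ℝ =>
          ((gA m (v ⟨m, Finset.mem_singleton_self m⟩)),
           (gB m (v ⟨m, Finset.mem_singleton_self m⟩)))) :=
        Measurable.prodMk ((hgA m).comp (measurable_pi_apply _))
          ((hgB m).comp (measurable_pi_apply _))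
      have hcomp := base.comp hφ hψ
      have h1 : ((fun v : { x // x ∈ Finset.range m } → ℝ =>
          ((∑ i : { x // x ∈ Finset.range m }, gA i.1 (v i)),
           (∑ i : { x // x ∈ Finset.range m }, gB i.1 (v i))))
            ∘ (fun ω (i : (Finset.range m : Finset ℕ)) => X i ω))
          = fun ω => (∑ h ∈ Finset.range m, gA h (X h ω),
              ∑ h ∈ Finset.range m, gB h (X h ω)) := by
        funext ω
        exact congrArg₂ Prod.mk (Finset.sum_coe_sort (Finset.range m) fun h => gA h (X h ω))
          (Finset.sum_coe_sort (Finset.range m) fun h => gB h (X h ω))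
      have h2 : ((fun v : { x // x ∈ ({m} : Finset ℕ) } → ℝ =>
          ((gA m (v ⟨m, Finset.mem_singleton_self m⟩)),
           (gB m (v ⟨m, Finset.mem_singleton_self m⟩))))
            ∘ (fun ω (i : (({m} : Finset ℕ) : Finset ℕ)) => X i ω))
          = fun ω => (gA m (X m ω), gB m (X m ω)) := rfl
      rw [h1, h2] at hcomp
      exact hcomp
    -- measurability and bounds of the partial sums
    have hAmeas : Measurable (fun ω => ∑ h ∈ Finset.range m, gA h (X h ω)) :=
      Finset.measurable_sum _ fun i _ => (hgA i).comp (hmeas i)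
    have hBmeas : Measurable (fun ω => ∑ h ∈ Finset.range m, gB h (X h ω)) :=
      Finset.measurable_sum _ fun i _ => (hgB i).comp (hmeas i)
    have hAbd : ∀ ω, |∑ h ∈ Finset.range m, gA h (X h ω)| ≤ (m : ℝ) := by
      intro ω
      calc |∑ h ∈ Finset.range m, gA h (X h ω)|
          ≤ ∑ h ∈ Finset.range m, |gA h (X h ω)| := Finset.abs_sum_le_sum_abs _ _
        _ ≤ ∑ _h ∈ Finset.range m, (1 : ℝ) := Finset.sum_le_sum fun i _ => hbA i _
        _ = (m : ℝ) := by simp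
    have hBbd : ∀ ω, |∑ h ∈ Finset.range m, gB h (X h ω)| ≤ (m : ℝ) := by
      intro ω
      calc |∑ h ∈ Finset.range m, gB h (X h ω)|
          ≤ ∑ h ∈ Finset.range m, |gB h (X h ω)| := Finset.abs_sum_le_sum_abs _ _
        _ ≤ ∑ _h ∈ Finset.range m, (1 : ℝ) := Finset.sum_le_sum fun i _ => hbB i _
        _ = (m : ℝ) := by simp
    -- the key arithmetic inequality
    have hγm1 : γ m ≤ 1 := by linarith [hΔγ m, hΔ0 m]
    have hΔm1 : Δ m ≤ 1 := by linarith [hΔγ m, hγ0 m]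
    have hterm : ∀ h ∈ Finset.range m,
        4 * (Δ h * γ h) * (Δ m * γ m) ≤ Δ h * γ m + γ h * Δ m := by
      intro h _
      have h1 : 0 ≤ Δ h * γ m := mul_nonneg (hΔ0 h) (hγ0 m)
      have h2 : 0 ≤ γ h * Δ m := mul_nonneg (hγ0 h) (hΔ0 m)
      have h3 : Δ h * γ m + γ h * Δ m ≤ 1 := by
        nlinarith [mul_nonneg (hΔ0 h) (sub_nonneg.2 hγm1), mul_nonneg (hγ0 h) (sub_nonneg.2 hΔm1),
          hΔγ h]
      have h4 : (Δ h * γ m + γ h * Δ m) ^ 2 ≤ Δ h * γ m + γ h * Δ m := by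
        nlinarith [mul_nonneg (add_nonneg h1 h2) (sub_nonneg.2 h3)]
      nlinarith [sq_nonneg (Δ h * γ m - γ h * Δ m), h4]
    have hC4 : 4 * (∑ h ∈ Finset.range m, Δ h * γ h) * (Δ m * γ m)
        ≤ (∑ h ∈ Finset.range m, Δ h) * γ m + (∑ h ∈ Finset.range m, γ h) * Δ m := by
      calc 4 * (∑ h ∈ Finset.range m, Δ h * γ h) * (Δ m * γ m)
          = ∑ h ∈ Finset.range m, 4 * (Δ h * γ h) * (Δ m * γ m) := by
            rw [Finset.mul_sum, Finset.sum_mul]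
        _ ≤ ∑ h ∈ Finset.range m, (Δ h * γ m + γ h * Δ m) := Finset.sum_le_sum hterm
        _ = (∑ h ∈ Finset.range m, Δ h) * γ m + (∑ h ∈ Finset.range m, γ h) * Δ m := by
            rw [Finset.sum_add_distrib, Finset.sum_mul, Finset.sum_mul]
    have hstep := step_lemma P
      (fun ω => ∑ h ∈ Finset.range m, gA h (X h ω))
      (fun ω => ∑ h ∈ Finset.range m, gB h (X h ω))
      (fun ω => gA m (X m ω)) (fun ω => gB m (X m ω))
      hIndm hAmeas hBmeas ((hgA m).comp (hmeas m)) ((hgB m).comp (hmeas m))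
      (m : ℝ) (m : ℝ) (Nat.cast_nonneg m) (Nat.cast_nonneg m)
      hAbd hBbd (fun ω => hbA m _) (fun ω => hbB m _)
      (∑ h ∈ Finset.range m, Δ h) (∑ h ∈ Finset.range m, γ h)
      (∑ h ∈ Finset.range m, Δ h * γ h) (Δ m) (γ m)
      (Finset.sum_nonneg fun i _ => hΔ0 i) (Finset.sum_nonneg fun i _ => hγ0 i)
      (hΔ0 m) (hγ0 m)
      ihA ihB (hEA m) (hEB m) ihA2 ihB2 (hEA2 m) (hEB2 m) ihAB (hEAB m) (hEA2B2 m) ihM hC4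
    simp only [Finset.sum_range_succ]
    exact hstep

/-- Fourth-moment bound. For independent real random variables `X h` with CDFs
`F h`, `s ≤ t ≤ u`, `Δ_h = F h t - F h s`, `γ_h = F h u - F h t`,
`α_h = 1_{s < X h ≤ t} - Δ_h` and `β_h = 1_{t < X h ≤ u} - γ_h`, one has
`(1/n²) E((∑ α_h)² (∑ β_h)²) ≤ 2 ((1/n) ∑ Δ_h) ((1/n) ∑ γ_h)`. -/
theorem empirical_fourth_moment_bound
    {Ω : Type*} [MeasurableSpace Ω] (P : Measure Ω) [IsProbabilityMeasure P]
    (n : ℕ) (hn : 0 < n)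
    (X : ℕ → Ω → ℝ) (hmeas : ∀ i, Measurable (X i))
    (hindep : iIndepFun X P)
    (F : ℕ → ℝ → ℝ)
    (hF : ∀ i x, F i x = (P {ω | X i ω ≤ x}).toReal)
    (s t u : ℝ) (hst : s ≤ t) (htu : t ≤ u)
    (Δ γ : ℕ → ℝ)
    (hΔ : ∀ h, Δ h = F h t - F h s) (hγ : ∀ h, γ h = F h u - F h t)
    (α β : ℕ → Ω → ℝ)
    (hα : ∀ h ω, α h ω = (if s < X h ω ∧ X h ω ≤ t then (1 : ℝ) else 0) - Δ h)
    (hβ : ∀ h ω, β h ω = (if t < X h ω ∧ X h ω ≤ u then (1 : ℝ) else 0) - γ h) :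
    (1 / (n : ℝ) ^ 2) *
        ∫ ω, (∑ h ∈ Finset.range n, α h ω) ^ 2 * (∑ h ∈ Finset.range n, β h ω) ^ 2 ∂P
      ≤ 2 * ((1 / n : ℝ) * ∑ h ∈ Finset.range n, Δ h) *
          ((1 / n : ℝ) * ∑ h ∈ Finset.range n, γ h) := by
  -- measurability of the basic events
  have hAsm : ∀ h, MeasurableSet {ω | s < X h ω ∧ X h ω ≤ t} := by
    intro h
    have he : {ω | s < X h ω ∧ X h ω ≤ t} = X h ⁻¹' Set.Ioc s t := rfl
    rw [he]; exact hmeas h measurableSet_Ioc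
  have hBsm : ∀ h, MeasurableSet {ω | t < X h ω ∧ X h ω ≤ u} := by
    intro h
    have he : {ω | t < X h ω ∧ X h ω ≤ u} = X h ⁻¹' Set.Ioc t u := rfl
    rw [he]; exact hmeas h measurableSet_Ioc
  -- the probabilities of the basic events
  have hPAs : ∀ h, (P {ω | s < X h ω ∧ X h ω ≤ t}).toReal = Δ h := by
    intro h
    have hsub : {ω | X h ω ≤ s} ⊆ {ω | X h ω ≤ t} := fun ω hw => le_trans hw hst
    have hdiff : {ω | s < X h ω ∧ X h ω ≤ t} = {ω | X h ω ≤ t} \ {ω | X h ω ≤ s} := by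
      ext ω; simp only [Set.mem_setOf_eq, Set.mem_diff, not_le]; tauto
    have hms : MeasurableSet {ω | X h ω ≤ s} := by
      have he : {ω | X h ω ≤ s} = X h ⁻¹' Set.Iic s := rfl
      rw [he]; exact hmeas h measurableSet_Iic
    rw [hdiff, measure_diff hsub hms.nullMeasurableSet (measure_ne_top P _),
      ENNReal.toReal_sub_of_le (measure_mono hsub) (measure_ne_top P _), hΔ h, hF, hF]
  have hPBs : ∀ h, (P {ω | t < X h ω ∧ X h ω ≤ u}).toReal = γ h := by
    intro h
    have hsub : {ω | X h ω ≤ t} ⊆ {ω | X h ω ≤ u} := fun ω hw => le_trans hw htu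
    have hdiff : {ω | t < X h ω ∧ X h ω ≤ u} = {ω | X h ω ≤ u} \ {ω | X h ω ≤ t} := by
      ext ω; simp only [Set.mem_setOf_eq, Set.mem_diff, not_le]; tauto
    have hms : MeasurableSet {ω | X h ω ≤ t} := by
      have he : {ω | X h ω ≤ t} = X h ⁻¹' Set.Iic t := rfl
      rw [he]; exact hmeas h measurableSet_Iic
    rw [hdiff, measure_diff hsub hms.nullMeasurableSet (measure_ne_top P _),
      ENNReal.toReal_sub_of_le (measure_mono hsub) (measure_ne_top P _), hγ h, hF, hF]
  -- basic inequalities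
  have hΔ0 : ∀ h, 0 ≤ Δ h := fun h => (hPAs h) ▸ ENNReal.toReal_nonneg
  have hγ0 : ∀ h, 0 ≤ γ h := fun h => (hPBs h) ▸ ENNReal.toReal_nonneg
  have hΔ1 : ∀ h, Δ h ≤ 1 := by
    intro h
    rw [← hPAs h]
    simpa using ENNReal.toReal_mono ENNReal.one_ne_top prob_le_one
  have hγ1 : ∀ h, γ h ≤ 1 := by
    intro h
    rw [← hPBs h]
    simpa using ENNReal.toReal_mono ENNReal.one_ne_top prob_le_one
  have hF1 : ∀ h x, F h x ≤ 1 := by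
    intro h x
    rw [hF]
    simpa using ENNReal.toReal_mono ENNReal.one_ne_top prob_le_one
  have hF0 : ∀ h x, 0 ≤ F h x := fun h x => by rw [hF]; exact ENNReal.toReal_nonneg
  have hΔγ1 : ∀ h, Δ h + γ h ≤ 1 := by
    intro h
    rw [hΔ h, hγ h]
    linarith [hF1 h u, hF0 h s]
  -- boundedness
  have hbA : ∀ h x, |(if s < x ∧ x ≤ t then (1 : ℝ) else 0) - Δ h| ≤ 1 := by
    intro h x
    by_cases hc : s < x ∧ x ≤ t
    · rw [if_pos hc, abs_le]; constructor <;> linarith [hΔ0 h, hΔ1 h]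
    · rw [if_neg hc, abs_le]; constructor <;> linarith [hΔ0 h, hΔ1 h]
  have hbB : ∀ h x, |(if t < x ∧ x ≤ u then (1 : ℝ) else 0) - γ h| ≤ 1 := by
    intro h x
    by_cases hc : t < x ∧ x ≤ u
    · rw [if_pos hc, abs_le]; constructor <;> linarith [hγ0 h, hγ1 h]
    · rw [if_neg hc, abs_le]; constructor <;> linarith [hγ0 h, hγ1 h]
  -- measurability of the summands
  have hsetA : MeasurableSet {x : ℝ | s < x ∧ x ≤ t} := measurableSet_Ioc
  have hsetB : MeasurableSet {x : ℝ | t < x ∧ x ≤ u} := measurableSet_Ioc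
  have hgA' : ∀ i, Measurable (fun x => (if s < x ∧ x ≤ t then (1 : ℝ) else 0) - Δ i) :=
    fun i => ((measurable_const.ite hsetA measurable_const).sub measurable_const)
  have hgB' : ∀ i, Measurable (fun x => (if t < x ∧ x ≤ u then (1 : ℝ) else 0) - γ i) :=
    fun i => ((measurable_const.ite hsetB measurable_const).sub measurable_const)
  -- the moment computations
  have hEA : ∀ h, ∫ ω, ((if s < X h ω ∧ X h ω ≤ t then (1 : ℝ) else 0) - Δ h) ∂P = 0 := by
    intro h
    have hrw : (fun ω => (if s < X h ω ∧ X h ω ≤ t then (1 : ℝ) else 0) - Δ h)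
        = fun ω => (1 * Set.indicator {ω | s < X h ω ∧ X h ω ≤ t} (1 : Ω → ℝ) ω
          + 0 * Set.indicator {ω | t < X h ω ∧ X h ω ≤ u} (1 : Ω → ℝ) ω + -Δ h) := by
      funext ω
      by_cases hc : s < X h ω ∧ X h ω ≤ t <;> by_cases hd : t < X h ω ∧ X h ω ≤ u <;>
        (simp [Set.indicator_apply, Set.mem_setOf_eq, hc, hd]; try ring)
    rw [hrw, integral_comb P (hAsm h) (hBsm h), hPAs h]
    ring
  have hEB : ∀ h, ∫ ω, ((if t < X h ω ∧ X h ω ≤ u then (1 : ℝ) else 0) - γ h) ∂P = 0 := by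
    intro h
    have hrw : (fun ω => (if t < X h ω ∧ X h ω ≤ u then (1 : ℝ) else 0) - γ h)
        = fun ω => (0 * Set.indicator {ω | s < X h ω ∧ X h ω ≤ t} (1 : Ω → ℝ) ω
          + 1 * Set.indicator {ω | t < X h ω ∧ X h ω ≤ u} (1 : Ω → ℝ) ω + -γ h) := by
      funext ω
      by_cases hc : s < X h ω ∧ X h ω ≤ t <;> by_cases hd : t < X h ω ∧ X h ω ≤ u <;>
        (simp [Set.indicator_apply, Set.mem_setOf_eq, hc, hd]; try ring)
    rw [hrw, integral_comb P (hAsm h) (hBsm h), hPBs h]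
    ring
  have hEA2 : ∀ h, ∫ ω, ((if s < X h ω ∧ X h ω ≤ t then (1 : ℝ) else 0) - Δ h) ^ 2 ∂P ≤ Δ h := by
    intro h
    have hrw : (fun ω => ((if s < X h ω ∧ X h ω ≤ t then (1 : ℝ) else 0) - Δ h) ^ 2)
        = fun ω => ((1 - 2 * Δ h) * Set.indicator {ω | s < X h ω ∧ X h ω ≤ t} (1 : Ω → ℝ) ω
          + 0 * Set.indicator {ω | t < X h ω ∧ X h ω ≤ u} (1 : Ω → ℝ) ω + Δ h ^ 2) := by
      funext ω
      by_cases hc : s < X h ω ∧ X h ω ≤ t <;> by_cases hd : t < X h ω ∧ X h ω ≤ u <;>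
        (simp [Set.indicator_apply, Set.mem_setOf_eq, hc, hd]; try ring)
    rw [hrw, integral_comb P (hAsm h) (hBsm h), hPAs h]
    nlinarith [sq_nonneg (Δ h)]
  have hEB2 : ∀ h, ∫ ω, ((if t < X h ω ∧ X h ω ≤ u then (1 : ℝ) else 0) - γ h) ^ 2 ∂P ≤ γ h := by
    intro h
    have hrw : (fun ω => ((if t < X h ω ∧ X h ω ≤ u then (1 : ℝ) else 0) - γ h) ^ 2)
        = fun ω => (0 * Set.indicator {ω | s < X h ω ∧ X h ω ≤ t} (1 : Ω → ℝ) ω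
          + (1 - 2 * γ h) * Set.indicator {ω | t < X h ω ∧ X h ω ≤ u} (1 : Ω → ℝ) ω + γ h ^ 2) := by
      funext ω
      by_cases hc : s < X h ω ∧ X h ω ≤ t <;> by_cases hd : t < X h ω ∧ X h ω ≤ u <;>
        (simp [Set.indicator_apply, Set.mem_setOf_eq, hc, hd]; try ring)
    rw [hrw, integral_comb P (hAsm h) (hBsm h), hPBs h]
    nlinarith [sq_nonneg (γ h)]
  have hEAB : ∀ h, ∫ ω, (((if s < X h ω ∧ X h ω ≤ t then (1 : ℝ) else 0) - Δ h) *
      ((if t < X h ω ∧ X h ω ≤ u then (1 : ℝ) else 0) - γ h)) ∂P = -(Δ h * γ h) := by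
    intro h
    have hrw : (fun ω => ((if s < X h ω ∧ X h ω ≤ t then (1 : ℝ) else 0) - Δ h) *
        ((if t < X h ω ∧ X h ω ≤ u then (1 : ℝ) else 0) - γ h))
        = fun ω => (-γ h * Set.indicator {ω | s < X h ω ∧ X h ω ≤ t} (1 : Ω → ℝ) ω
          + -Δ h * Set.indicator {ω | t < X h ω ∧ X h ω ≤ u} (1 : Ω → ℝ) ω + Δ h * γ h) := by
      funext ω
      by_cases hc : s < X h ω ∧ X h ω ≤ t <;> by_cases hd : t < X h ω ∧ X h ω ≤ u
      · exact absurd hd.1 (not_lt.2 hc.2)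
      all_goals (simp [Set.indicator_apply, Set.mem_setOf_eq, hc, hd]; try ring)
    rw [hrw, integral_comb P (hAsm h) (hBsm h), hPAs h, hPBs h]
    ring
  have hEA2B2 : ∀ h, ∫ ω, (((if s < X h ω ∧ X h ω ≤ t then (1 : ℝ) else 0) - Δ h) ^ 2 *
      ((if t < X h ω ∧ X h ω ≤ u then (1 : ℝ) else 0) - γ h) ^ 2) ∂P ≤ 2 * (Δ h * γ h) := by
    intro h
    have hrw : (fun ω => ((if s < X h ω ∧ X h ω ≤ t then (1 : ℝ) else 0) - Δ h) ^ 2 *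
        ((if t < X h ω ∧ X h ω ≤ u then (1 : ℝ) else 0) - γ h) ^ 2)
        = fun ω => ((1 - 2 * Δ h) * γ h ^ 2 * Set.indicator {ω | s < X h ω ∧ X h ω ≤ t} (1 : Ω → ℝ) ω
          + Δ h ^ 2 * (1 - 2 * γ h) * Set.indicator {ω | t < X h ω ∧ X h ω ≤ u} (1 : Ω → ℝ) ω
          + Δ h ^ 2 * γ h ^ 2) := by
      funext ω
      by_cases hc : s < X h ω ∧ X h ω ≤ t <;> by_cases hd : t < X h ω ∧ X h ω ≤ u
      · exact absurd hd.1 (not_lt.2 hc.2)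
      all_goals (simp [Set.indicator_apply, Set.mem_setOf_eq, hc, hd]; try ring)
    rw [hrw, integral_comb P (hAsm h) (hBsm h), hPAs h, hPBs h]
    nlinarith [mul_nonneg (mul_nonneg (hΔ0 h) (hγ0 h))
        (by linarith [hΔ1 h, hγ1 h] : (0:ℝ) ≤ 2 - Δ h - γ h),
      sq_nonneg (Δ h * γ h), mul_nonneg (hΔ0 h) (hγ0 h)]
  -- apply the main induction
  have key6 := (fourth_moment_aux P X hmeas hindep
      (fun h x => (if s < x ∧ x ≤ t then (1 : ℝ) else 0) - Δ h)
      (fun h x => (if t < x ∧ x ≤ u then (1 : ℝ) else 0) - γ h)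
      hgA' hgB' hbA hbB Δ γ hΔ0 hγ0 hΔγ1 hEA hEB hEA2 hEB2 hEAB hEA2B2 n).2.2.2.2.2
  simp only [hα, hβ]
  refine le_trans (mul_le_mul_of_nonneg_left key6 (by positivity)) (le_of_eq (by ring))
end
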